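/- Every fully reachable M-structure in the Petri net semantics N(J) of a core join process J is local: if transitions t₁, t₂, t₃ of N(J) satisfy •t₁ ∩ •t₂ ≠ ∅ and •t₂ ∩ •t₃ ≠ ∅ (with t₁ ≠ t₂, t₂ ≠ t₃, t₁ ≠ t₃ and •t₁ ∩ •t₃ = ∅, forming an M), then l(t₁) = l(t₂) = l(t₃). -/
import Mathlib


/-! Core join-calculus syntax. Names are natural numbers. A process is `nil`, a
message `x⟨v⟩`, a parallel composition, or a definition
`def x⟨u⟩ ∥ y⟨v⟩ ▷ R in P`, written `defn x u y v R P`. -/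

abbrev Name := ℕ

inductive Proc : Type
  | nil : Proc
  | msg : Name → Name → Proc
  | par : Proc → Proc → Proc
  | defn : Name → Name → Name → Name → Proc → Proc → Proc
  deriving DecidableEq

/-- A join definition `x⟨u⟩ ∥ y⟨v⟩ ▷ R`, as the tuple `(x, u, y, v, R)`. -/
abbrev JDef := Name × Name × Name × Name × Proc

/-- Defined variables of the join pattern of a definition. -/
def JDef.dv (D : JDef) : Finset Name := {D.1, D.2.2.1}

/-- Stacks over an alphabet `α`. -/
inductive Stack (α : Type) : Type
  | bot : Stack α
  | cons : α → Stack α → Stack α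
  deriving DecidableEq

namespace Stack
variable {α : Type}
def push (s : Stack α) (e : α) : Stack α := cons e s
def pop : Stack α → Stack α
  | bot => bot
  | cons _ s => s
def top : Stack α → Option α
  | bot => none
  | cons e _ => some e
end Stack

/-- Places: a message `x⟨v⟩` together with the scope stack of the sender name and
the scope stack of the sent name. -/
abbrev Place := (Name × Name) × Stack JDef × Stack JDef

set_option synthInstance.maxSize 1024 in
instance : DecidableEq Place :=
  inferInstanceAs (DecidableEq ((Name × Name) × Stack JDef × Stack JDef))

/-- Scope functions, mapping each name to a (renamed) name and its scope. -/
abbrev ScopeFun := Name → Name × Stack JDef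

/-- The initial scope function `f_⊥`. -/
def fbot : ScopeFun := fun n => (n, Stack.bot)

/-- Pop a stack until the given name is a defined variable of the top definition
(by convention every name is in `dv(⊥)`, i.e. the empty stack is kept). This
realizes the repeated applications of the scope-reducing operator `g` in the
decomposition of messages. -/
def popUntil (n : Name) : Stack JDef → Stack JDef
  | .bot => .bot
  | .cons D s => if n ∈ D.dv then .cons D s else popUntil n s

/-- The decomposition function `dec`, mapping a core join process and a scope
function to a finite set of places. -/
def dec : Proc → ScopeFun → Finset Place
  | .nil, _ => ∅
  | .msg x v, f =>
      {(((f x).1, (f v).1), popUntil (f x).1 (f x).2, popUntil (f v).1 (f v).2)}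
  | .par P Q, f => dec P f ∪ dec Q f
  | .defn x u y v R P, f => dec P (fun n => ((f n).1, (f n).2.push (x, u, y, v, R)))

/-- A net transition: preset, label (a join definition) and postset. -/
abbrev JTrans := Set Place × JDef × Set Place

/-- A labeled Petri net for the join semantics. -/
structure JNet where
  places : Set Place
  trans : Set JTrans
  m0 : Set Place

/-- The scope function `f_t` used to decompose the right-hand side of a reaction. -/
def ft (u v a b : Name) (s sa sb : Stack JDef) : ScopeFun :=
  fun n => if n = u then (a, sa) else if n = v then (b, sb) else (n, s)

/-- The transition rule: whenever two places carry messages matching the join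
pattern of the definition on top of their (shared) sender-scope stack, the net
contains a corresponding transition, whose postset is the decomposition of the
right-hand side, is disjoint from the initial marking, and is produced by no
other transition. -/
def TransRule (N : JNet) : Prop :=
  ∀ x a y b u v (R : Proc) (s sa sb : Stack JDef),
    (((x, a), s, sa) : Place) ∈ N.places → (((y, b), s, sb) : Place) ∈ N.places →
    s.top = some (x, u, y, v, R) →
    ∃ t ∈ N.trans,
      t.1 = {(((x, a), s, sa) : Place), ((y, b), s, sb)} ∧
      t.2.1 = (x, u, y, v, R) ∧
      t.2.2 = ↑(dec R (ft u v a b s sa sb)) ∧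
      t.2.2 ∩ N.m0 = ∅ ∧
      ∀ p' ∈ t.2.2, ∀ t' ∈ N.trans, p' ∈ t'.2.2 → t' = t

/-- `N` satisfies the defining conditions of the Petri net semantics of `J`. -/
def Sat (J : Proc) (N : JNet) : Prop :=
  N.m0 = ↑(dec J fbot) ∧ N.m0 ⊆ N.places ∧
  (∀ t ∈ N.trans, t.1 ⊆ N.places ∧ t.2.2 ⊆ N.places) ∧
  TransRule N

/-- `N` is the Petri net semantics `N(J)` of `J`: the smallest Petri net whose
initial marking is `dec(J, f_⊥)` and which satisfies the transition rule. -/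
def IsSemantics (J : Proc) (N : JNet) : Prop :=
  Sat J N ∧ ∀ N', Sat J N' → N.places ⊆ N'.places ∧ N.trans ⊆ N'.trans

/-- Enabledness of a transition under a marking. -/
def Enabled (m : Place → ℕ) (t : JTrans) : Prop := ∀ p ∈ t.1, 0 < m p

open Classical in
/-- The firing rule `m [t⟩ m'`. -/
noncomputable def Fires (m : Place → ℕ) (t : JTrans) (m' : Place → ℕ) : Prop :=
  Enabled m t ∧ ∀ p, m' p =
    if p ∈ t.2.2 \ t.1 then m p + 1
    else if p ∈ t.1 \ t.2.2 then m p - 1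
    else m p

open Classical in
/-- The marking corresponding to a set of places (one token on each). -/
noncomputable def ind (S : Set Place) : Place → ℕ := fun p => if p ∈ S then 1 else 0

/-- Reachable markings of a join net. -/
def JReach (N : JNet) (m : Place → ℕ) : Prop :=
  Relation.ReflTransGen (fun m₁ m₂ => ∃ t ∈ N.trans, Fires m₁ t m₂) (ind N.m0) m

/-- Every fully reachable M-structure in the Petri net semantics `N(J)` is local:
three pairwise distinct transitions forming an M (the outer two have disjoint
presets, each overlapping the middle one's preset) all carry the same label. -/
lemma trans_label (J : Proc) (N : JNet) (h : IsSemantics J N) :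
    ∀ t ∈ N.trans, ∀ p ∈ t.1, p.2.1.top = some t.2.1 := by
  obtain ⟨hSat, hMin⟩ := h
  obtain ⟨hm0, hm0p, htp, htr⟩ := hSat
  set Good : JTrans → Prop := fun t => ∀ p ∈ t.1, p.2.1.top = some t.2.1 with hG
  set N' : JNet := ⟨N.places, {t ∈ N.trans | Good t}, N.m0⟩ with hN'
  have hsub : N'.trans ⊆ N.trans := fun t ht => ht.1
  have hSat' : Sat J N' := by
    refine ⟨hm0, hm0p, fun t ht => htp t (hsub ht), ?_⟩
    intro x a y b u v R s sa sb hp hq htop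
    obtain ⟨t, htN, hpre, hlab, hpost, hdisj, huniq⟩ :=
      htr x a y b u v R s sa sb hp hq htop
    refine ⟨t, ⟨htN, ?_⟩, hpre, hlab, hpost, hdisj,
      fun p' hp' t' ht' hp'' => huniq p' hp' t' (hsub ht') hp''⟩
    intro p hpmem
    rw [hpre] at hpmem
    rcases hpmem with h | h <;> subst h <;> rw [hlab] <;> exact htop
  have := (hMin N' hSat').2
  intro t ht
  exact (this ht).2
theorem M_is_local (J : Proc) (N : JNet) (h : IsSemantics J N)
    (t1 t2 t3 : JTrans) (h1 : t1 ∈ N.trans) (h2 : t2 ∈ N.trans) (h3 : t3 ∈ N.trans)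
    (h12 : t1 ≠ t2) (h23 : t2 ≠ t3) (h13 : t1 ≠ t3)
    (o12 : (t1.1 ∩ t2.1).Nonempty) (o23 : (t2.1 ∩ t3.1).Nonempty)
    (d13 : t1.1 ∩ t3.1 = ∅) :
    t1.2.1 = t2.2.1 ∧ t2.2.1 = t3.2.1 := by
  obtain ⟨p, hp1, hp2⟩ := o12
  obtain ⟨q, hq2, hq3⟩ := o23
  have L := trans_label J N h
  constructor
  · have e1 := L t1 h1 p hp1
    have e2 := L t2 h2 p hp2
    rw [e1] at e2; exact Option.some_injective _ e2
  · have e2 := L t2 h2 q hq2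
    have e3 := L t3 h3 q hq3
    rw [e2] at e3; exact Option.some_injective _ e3
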